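/- Let f : {±1}^n → [-1,1] have degree d ≥ 1. Then Σ_{i=1}^n |f̂({i})| ≤ d; equivalently, the degree-1 homogeneous part satisfies ‖f̂_1‖_1 = ‖f_1‖_∞ ≤ d. -/

import Mathlib

/-- The sign ±1 corresponding to a boolean: `true ↦ 1`, `false ↦ -1`. -/
noncomputable def sgn (b : Bool) : ℝ := if b then 1 else -1

/-- The character (monomial) `χ_S(x) = ∏_{j ∈ S} x_j` on the cube `{±1}^n`. -/
noncomputable def chi {n : ℕ} (S : Finset (Fin n)) (x : Fin n → Bool) : ℝ :=
  ∏ i ∈ S, sgn (x i)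

/-- The Fourier coefficient `f̂(S) = E[f(X) χ_S(X)]` for `X` uniform on `{±1}^n`. -/
noncomputable def fcoeff {n : ℕ} (f : (Fin n → Bool) → ℝ) (S : Finset (Fin n)) : ℝ :=
  (∑ x : Fin n → Bool, f x * chi S x) / 2 ^ n

/-- The degree-`ℓ` homogeneous part `f_ℓ(x) = ∑_{|S| = ℓ} f̂(S) χ_S(x)`. -/
noncomputable def homPart {n : ℕ} (f : (Fin n → Bool) → ℝ) (ℓ : ℕ) (x : Fin n → Bool) : ℝ :=
  ∑ S ∈ Finset.univ.filter (fun S : Finset (Fin n) => S.card = ℓ), fcoeff f S * chi S x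

/-- `C(d, ℓ)`: the coefficient of `z^ℓ` in the degree-`d` Chebyshev polynomial `T_d`. -/
noncomputable def chebCoeff (d ℓ : ℕ) : ℝ := (Polynomial.Chebyshev.T ℝ (d : ℤ)).coeff ℓ


namespace S18
open Polynomial Finset Real


noncomputable def nod (m : ℕ) (j : ℕ) : ℝ := Real.cos (j * π / (2*m+1))

lemma dpos (m : ℕ) : (0:ℝ) < 2*m+1 := by positivity

lemma theta_nonneg (m j : ℕ) : 0 ≤ (j:ℝ) * π / (2*m+1) := by positivity

lemma theta_le_pi {m j : ℕ} (hj : j ≤ 2*m+1) : (j:ℝ) * π / (2*m+1) ≤ π := by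
  rw [div_le_iff₀ (dpos m)]
  have : (j:ℝ) ≤ 2*m+1 := by exact_mod_cast hj
  nlinarith [Real.pi_pos]

lemma theta_mem {m j : ℕ} (hj : j ≤ 2*m+1) :
    (j:ℝ) * π / (2*m+1) ∈ Set.Icc 0 π := ⟨theta_nonneg m j, theta_le_pi hj⟩

lemma theta_lt {m : ℕ} {j k : ℕ} (hjk : j < k) :
    (j:ℝ) * π / (2*m+1) < (k:ℝ) * π / (2*m+1) := by
  have : (j:ℝ) < k := by exact_mod_cast hjk
  have := Real.pi_pos
  have := dpos m
  gcongr

lemma nod_lt {m j k : ℕ} (hk : k ≤ 2*m+1) (hjk : j < k) : nod m k < nod m j :=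
  Real.strictAntiOn_cos (theta_mem (le_trans (Nat.le_of_lt hjk) hk)) (theta_mem hk)
    (theta_lt hjk)

lemma nod_injOn (m : ℕ) : Set.InjOn (nod m) ↑(Finset.range (2*m+2)) := by
  intro a ha b hb hab
  simp only [Finset.coe_range, Set.mem_Iio] at ha hb
  by_contra hne
  rcases Nat.lt_or_ge a b with h | h
  · exact absurd hab (ne_of_gt (nod_lt (by omega) h))
  · exact absurd hab (ne_of_lt (nod_lt (by omega) (by omega)))

lemma nod_ne_zero {m j : ℕ} (hj : j ≤ 2*m+1) : nod m j ≠ 0 := by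
  intro h
  rw [nod, Real.cos_eq_zero_iff] at h
  obtain ⟨k, hk⟩ := h
  have hpi := Real.pi_ne_zero
  have h2 : (j:ℝ) * 2 = (2*k+1) * (2*m+1) := by
    field_simp at hk
    have h2' : ((j:ℝ)*2) * π = ((2*k+1) * (2*m+1)) * π := by rw [hk]; ring
    exact mul_right_cancel₀ hpi h2'
  have h3 : (j:ℤ) * 2 = (2*k+1) * (2*m+1) := by exact_mod_cast h2
  have : Even ((j:ℤ)*2) := ⟨j, by ring⟩
  have hodd : Odd ((2*k+1) * (2*(m:ℤ)+1)) := Odd.mul ⟨k, by ring⟩ ⟨m, by ring⟩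
  rw [h3] at this
  exact (Int.not_odd_iff_even.mpr this) hodd

lemma nod_pos {m j : ℕ} (hj : j ≤ m) : 0 < nod m j := by
  apply Real.cos_pos_of_mem_Ioo
  constructor
  · have := Real.pi_pos; have := theta_nonneg m j; linarith
  · rw [div_lt_iff₀ (dpos m)]
    have : (j:ℝ) ≤ m := by exact_mod_cast hj
    nlinarith [Real.pi_pos]

lemma nod_neg {m j : ℕ} (hj1 : m < j) (hj2 : j ≤ 2*m+1) : nod m j < 0 := by
  apply Real.cos_neg_of_pi_div_two_lt_of_lt
  · rw [lt_div_iff₀ (dpos m)]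
    have : (m:ℝ) + 1 ≤ j := by exact_mod_cast hj1
    nlinarith [Real.pi_pos]
  · have := theta_le_pi hj2
    have := Real.pi_pos
    linarith

lemma nod_symm {m j : ℕ} (hj : j ≤ 2*m+1) : nod m (2*m+1-j) = -nod m j := by
  rw [nod, nod, ← Real.cos_pi_sub]
  congr 1
  have : ((2*m+1-j : ℕ) : ℝ) = (2*m+1 : ℝ) - j := by
    push_cast [Nat.cast_sub hj]; ring
  rw [this]
  field_simp

lemma sum_inv_nod (m : ℕ) : ∑ j ∈ Finset.range (2*m+2), (nod m j)⁻¹ = 0 := by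
  apply Finset.sum_involution (fun j _ => 2*m+1-j)
  · intro a ha
    have ha' : a ≤ 2*m+1 := by simp at ha; omega
    rw [nod_symm ha', inv_neg, add_neg_cancel]
  · intro a ha _
    simp at ha; omega
  · intro a ha; simp at ha ⊢; omega
  · intro a ha; simp at ha; omega

noncomputable def wt (m j : ℕ) : ℝ :=
  eval 0 (derivative (Lagrange.basis (Finset.range (2*m+2)) (nod m) j))

lemma derivative_finset_prod (s : Finset ℕ) (f : ℕ → Polynomial ℝ) :
    derivative (∏ k ∈ s, f k) = ∑ k ∈ s, (∏ l ∈ s.erase k, f l) * derivative (f k) := by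
  rw [Finset.prod_eq_multiset_prod, Polynomial.derivative_prod]; rfl

lemma eval0_basisDivisor (x y : ℝ) :
    eval 0 (Lagrange.basisDivisor x y) = (x - y)⁻¹ * (-y) := by
  simp [Lagrange.basisDivisor]

lemma deriv_basisDivisor (x y : ℝ) :
    derivative (Lagrange.basisDivisor x y) = C (x - y)⁻¹ := by
  simp [Lagrange.basisDivisor]

/-- interpolation identity for the derivative at 0 -/
lemma deriv_eval_eq (m : ℕ) (p : Polynomial ℝ) (hp : p.degree < ((2*m+2 : ℕ) : WithBot ℕ)) :
    eval 0 (derivative p) = ∑ j ∈ Finset.range (2*m+2), eval (nod m j) p * wt m j := by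
  have h := Lagrange.eq_interpolate (f := p) (nod_injOn m) (by simpa using hp)
  conv_lhs => rw [h]
  rw [Lagrange.interpolate_apply]
  rw [map_sum, eval_finset_sum]
  apply Finset.sum_congr rfl
  intro j hj
  rw [derivative_mul, derivative_C, zero_mul, zero_add, eval_mul, eval_C]
  rfl

lemma wt_eq (m : ℕ) {j : ℕ} (hj : j ∈ Finset.range (2*m+2)) :
    wt m j = (nod m j)⁻¹ *
      ∏ k ∈ (Finset.range (2*m+2)).erase j, ((nod m j - nod m k)⁻¹ * (-nod m k)) := by
  classical
  set E := (Finset.range (2*m+2)).erase j with hE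
  set e : ℕ → ℝ := fun k => (nod m j - nod m k)⁻¹ * (-nod m k) with he
  have hjle : j ≤ 2*m+1 := by simp at hj; omega
  have hsub_ne : ∀ k ∈ E, nod m j - nod m k ≠ 0 := by
    intro k hk
    have hk1 : k ∈ Finset.range (2*m+2) := Finset.mem_of_mem_erase hk
    have hk2 : k ≠ j := Finset.ne_of_mem_erase hk
    have := nod_injOn m (by exact_mod_cast hj) (by exact_mod_cast hk1)
    intro h0
    exact hk2 (this (by linarith)).symm
  have he_ne : ∀ k ∈ E, e k ≠ 0 := by
    intro k hk
    have hk1 : k ∈ Finset.range (2*m+2) := Finset.mem_of_mem_erase hk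
    have : nod m k ≠ 0 := nod_ne_zero (by simp at hk1; omega)
    simp only [he]
    exact mul_ne_zero (inv_ne_zero (hsub_ne k hk)) (by simpa using this)
  have hbasis : Lagrange.basis (Finset.range (2*m+2)) (nod m) j
      = ∏ k ∈ E, Lagrange.basisDivisor (nod m j) (nod m k) := rfl
  rw [wt, hbasis, derivative_finset_prod, eval_finset_sum]
  have hterm : ∀ k ∈ E,
      eval 0 ((∏ l ∈ E.erase k, Lagrange.basisDivisor (nod m j) (nod m l)) *
        derivative (Lagrange.basisDivisor (nod m j) (nod m k)))
      = (∏ l ∈ E, e l) * (-(nod m k))⁻¹ := by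
    intro k hk
    rw [eval_mul, deriv_basisDivisor, eval_C, eval_prod]
    simp only [eval0_basisDivisor]
    have hprod : ∏ l ∈ E.erase k, e l = (∏ l ∈ E, e l) / e k := by
      rw [eq_div_iff (he_ne k hk)]
      exact Finset.prod_erase_mul E e hk
    calc (∏ l ∈ E.erase k, e l) * (nod m j - nod m k)⁻¹
        = ((∏ l ∈ E, e l) / e k) * (nod m j - nod m k)⁻¹ := by rw [hprod]
      _ = (∏ l ∈ E, e l) * (-(nod m k))⁻¹ := by
          have h1 := hsub_ne k hk
          have h3 : (e k)⁻¹ = (nod m j - nod m k) * (-(nod m k))⁻¹ := by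
            simp only [he, mul_inv, inv_inv]
          rw [div_eq_mul_inv, h3,
            show (∏ l ∈ E, e l) * ((nod m j - nod m k) * (-(nod m k))⁻¹) *
                (nod m j - nod m k)⁻¹ =
              (∏ l ∈ E, e l) * (-(nod m k))⁻¹ *
                ((nod m j - nod m k) * (nod m j - nod m k)⁻¹) from by ring,
            mul_inv_cancel₀ h1, mul_one]
  rw [Finset.sum_congr rfl hterm, ← Finset.mul_sum]
  have hsum : ∑ k ∈ E, (-(nod m k))⁻¹ = (nod m j)⁻¹ := by
    have h1 : ∑ k ∈ E, (-(nod m k))⁻¹ = - ∑ k ∈ E, (nod m k)⁻¹ := by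
      rw [← Finset.sum_neg_distrib]
      apply Finset.sum_congr rfl
      intro k _; rw [inv_neg]
    rw [h1]
    clear h1
    have h2 := Finset.add_sum_erase (Finset.range (2*m+2)) (fun k => (nod m k)⁻¹) hj
    rw [sum_inv_nod m] at h2
    have h2' : (nod m j)⁻¹ + ∑ x ∈ E, (nod m x)⁻¹ = 0 := h2
    linarith
  rw [hsum, mul_comm]

lemma prod_sign_aux (s : Finset ℕ) (g : ℕ → ℝ) (h : ∀ i ∈ s, g i ≠ 0) :
    0 < (-1:ℝ)^((s.filter (fun i => g i < 0)).card) * ∏ i ∈ s, g i := by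
  classical
  induction s using Finset.induction_on with
  | empty => simp
  | @insert a t ha ih =>
    have hg : ∀ i ∈ t, g i ≠ 0 := fun i hi => h i (Finset.mem_insert_of_mem hi)
    have hga : g a ≠ 0 := h a (Finset.mem_insert_self a t)
    have iht := ih hg
    rw [Finset.filter_insert, Finset.prod_insert ha]
    by_cases hlt : g a < 0
    · rw [if_pos hlt, Finset.card_insert_of_notMem (fun hc => ha (Finset.mem_of_mem_filter a hc)),
        pow_succ]
      have : (0:ℝ) < (-g a) := by linarith
      calc (0:ℝ) < ((-1)^(t.filter (fun i => g i < 0)).card * ∏ i ∈ t, g i) * (-g a) :=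
            mul_pos iht this
        _ = (-1)^(t.filter (fun i => g i < 0)).card * (-1) * (g a * ∏ i ∈ t, g i) := by ring
    · rw [if_neg hlt]
      have : 0 < g a := lt_of_le_of_ne (not_lt.mp hlt) (Ne.symm hga)
      calc (0:ℝ) < ((-1)^(t.filter (fun i => g i < 0)).card * ∏ i ∈ t, g i) * g a :=
            mul_pos iht this
        _ = (-1)^(t.filter (fun i => g i < 0)).card * (g a * ∏ i ∈ t, g i) := by ring

lemma wt_sign (m : ℕ) {j : ℕ} (hj : j ∈ Finset.range (2*m+2)) :
    0 < (-1:ℝ)^(j+m) * wt m j := by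
  classical
  have hjle : j ≤ 2*m+1 := by simp at hj; omega
  set E := (Finset.range (2*m+2)).erase j with hE
  set e : ℕ → ℝ := fun k => (nod m j - nod m k)⁻¹ * (-nod m k) with he
  -- sign of e k in four cases
  have hcase : ∀ k, k ≤ 2*m+1 → k ≠ j → (e k < 0 ↔ ((j < k ∧ k ≤ m) ∨ (k < j ∧ m < k))) := by
    intro k hk2 hkj
    have hsub : k < j → nod m j - nod m k < 0 := fun h => by
      have := nod_lt hjle h; linarith
    have hsub' : j < k → 0 < nod m j - nod m k := fun h => by
      have := nod_lt hk2 h; linarith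
    constructor
    · intro hneg
      rcases Nat.lt_or_ge k j with h1 | h1
      · rcases Nat.lt_or_ge m k with h2 | h2
        · exact Or.inr ⟨h1, h2⟩
        · exfalso
          have p1 : (nod m j - nod m k)⁻¹ < 0 := inv_neg''.mpr (hsub h1)
          have p2 : -nod m k < 0 := by have := nod_pos h2; linarith
          have := mul_pos_of_neg_of_neg p1 p2
          simp only [he] at hneg; linarith
      · have h1' : j < k := by omega
        rcases Nat.lt_or_ge m k with h2 | h2
        · exfalso
          have p1 : 0 < (nod m j - nod m k)⁻¹ := inv_pos.mpr (hsub' h1')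
          have p2 : 0 < -nod m k := by have := nod_neg h2 hk2; linarith
          have := mul_pos p1 p2
          simp only [he] at hneg; linarith
        · exact Or.inl ⟨h1', h2⟩
    · intro hcases
      rcases hcases with ⟨h1, h2⟩ | ⟨h1, h2⟩
      · have p1 : 0 < (nod m j - nod m k)⁻¹ := inv_pos.mpr (hsub' h1)
        have p2 : -nod m k < 0 := by have := nod_pos h2; linarith
        simpa only [he] using mul_neg_of_pos_of_neg p1 p2
      · have p1 : (nod m j - nod m k)⁻¹ < 0 := inv_neg''.mpr (hsub h1)
        have p2 : 0 < -nod m k := by have := nod_neg h2 hk2; linarith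
        simpa only [he] using mul_neg_of_neg_of_pos p1 p2
  have he_ne : ∀ k ∈ E, e k ≠ 0 := by
    intro k hk
    have hk1 : k ∈ Finset.range (2*m+2) := Finset.mem_of_mem_erase hk
    have hk2 : k ≤ 2*m+1 := by simp at hk1; omega
    have hkj : k ≠ j := Finset.ne_of_mem_erase hk
    have h2 : nod m k ≠ 0 := nod_ne_zero hk2
    have hsub : nod m j - nod m k ≠ 0 := by
      rcases Nat.lt_or_ge k j with h | h
      · have := nod_lt hjle h; intro hc; linarith
      · have := nod_lt hk2 (by omega : j < k); intro hc; linarith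
    exact mul_ne_zero (inv_ne_zero hsub) (by simpa using h2)
  have hmemE : ∀ k, k ∈ E ↔ (k ≠ j ∧ k < 2*m+2) := by
    intro k; rw [hE, Finset.mem_erase, Finset.mem_range]
  have hfilter : E.filter (fun k => e k < 0)
      = if j ≤ m then Finset.Ioc j m else Finset.Ico (m+1) j := by
    ext k
    rw [Finset.mem_filter, hmemE]
    by_cases hjm : j ≤ m
    · rw [if_pos hjm, Finset.mem_Ioc]
      constructor
      · rintro ⟨⟨hkj, hk⟩, hneg⟩
        rcases (hcase k (by omega) hkj).mp hneg with ⟨h1, h2⟩ | ⟨h1, h2⟩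
        · exact ⟨h1, h2⟩
        · omega
      · rintro ⟨h1, h2⟩
        refine ⟨⟨by omega, by omega⟩, ?_⟩
        exact (hcase k (by omega) (by omega)).mpr (Or.inl ⟨h1, h2⟩)
    · rw [if_neg hjm, Finset.mem_Ico]
      constructor
      · rintro ⟨⟨hkj, hk⟩, hneg⟩
        rcases (hcase k (by omega) hkj).mp hneg with ⟨h1, h2⟩ | ⟨h1, h2⟩
        · omega
        · omega
      · rintro ⟨h1, h2⟩
        refine ⟨⟨by omega, by omega⟩, ?_⟩
        exact (hcase k (by omega) (by omega)).mpr (Or.inr ⟨by omega, by omega⟩)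
  have hprodsign := prod_sign_aux E e he_ne
  rw [hfilter] at hprodsign
  rw [wt_eq m hj, ← hE, ← he]
  by_cases hjm : j ≤ m
  · rw [if_pos hjm, Nat.card_Ioc] at hprodsign
    have hpos : 0 < nod m j := nod_pos hjm
    have hparity : (-1:ℝ)^(j+m) = (-1)^(m-j) := by
      rw [show j+m = (m-j)+2*j by omega, pow_add, pow_mul]
      norm_num
    rw [hparity]
    calc (0:ℝ) < ((-1)^(m-j) * ∏ k ∈ E, e k) * (nod m j)⁻¹ :=
          mul_pos hprodsign (inv_pos.mpr hpos)
      _ = (-1)^(m-j) * ((nod m j)⁻¹ * ∏ k ∈ E, e k) := by ring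
  · rw [if_neg hjm, Nat.card_Ico] at hprodsign
    have hneg' : nod m j < 0 := nod_neg (by omega) hjle
    have hparity : (-1:ℝ)^(j+m) = -(-1)^(j-(m+1)) := by
      rw [show j+m = (j-(m+1))+(2*m+1) by omega, pow_add, pow_add, pow_mul]
      norm_num
    rw [hparity]
    have : 0 < -(nod m j)⁻¹ := by
      have := inv_neg''.mpr hneg'; linarith
    calc (0:ℝ) < ((-1)^(j-(m+1)) * ∏ k ∈ E, e k) * (-(nod m j)⁻¹) :=
          mul_pos hprodsign this
      _ = -(-1)^(j-(m+1)) * ((nod m j)⁻¹ * ∏ k ∈ E, e k) := by ring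

lemma degree_T_le (N : ℕ) : (Polynomial.Chebyshev.T ℝ (N:ℤ)).degree ≤ (N : WithBot ℕ) := by
  induction N using Nat.strong_induction_on with
  | _ N ih =>
    match N with
    | 0 => simp [Polynomial.Chebyshev.T_zero, Polynomial.degree_one_le]
    | 1 => simpa [Polynomial.Chebyshev.T_one] using Polynomial.degree_X_le
    | (k+2) =>
      have h1 := ih (k+1) (by omega)
      have h0 := ih k (by omega)
      have : ((k+2 : ℕ) : ℤ) = (k : ℤ) + 2 := by push_cast; ring
      rw [this, Polynomial.Chebyshev.T_add_two]
      refine le_trans (Polynomial.degree_sub_le _ _) ?_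
      rw [max_le_iff]
      constructor
      · refine le_trans (Polynomial.degree_mul_le _ _) ?_
        have h2 : (2 * Polynomial.X : Polynomial ℝ).degree ≤ 1 := by
          rw [show (2 * Polynomial.X : Polynomial ℝ) = Polynomial.C 2 * Polynomial.X by
            rw [show ((2:ℝ[X])) = Polynomial.C ((2:ℕ):ℝ) by
              rw [Polynomial.C_eq_natCast]; norm_num]
            norm_num]
          exact le_of_eq (Polynomial.degree_C_mul_X two_ne_zero)
        have : ((k:ℤ)+1) = ((k+1 : ℕ) : ℤ) := by push_cast; ring
        rw [this]
        calc (2 * Polynomial.X : Polynomial ℝ).degree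
              + (Polynomial.Chebyshev.T ℝ ((k+1 : ℕ):ℤ)).degree
            ≤ 1 + ((k+1 : ℕ) : WithBot ℕ) := add_le_add h2 h1
          _ = ((k+2 : ℕ) : WithBot ℕ) := by
              rw [show (1 : WithBot ℕ) = ((1:ℕ) : WithBot ℕ) from rfl, ← Nat.cast_add]
              exact congrArg Nat.cast (by omega)
      · exact le_trans h0 (by exact_mod_cast WithBot.coe_le_coe.mpr (by omega))

lemma eval_nod_T (m : ℕ) {j : ℕ} (hj : j ≤ 2*m+1) :
    Polynomial.eval (nod m j) (Polynomial.Chebyshev.T ℝ ((2*m+1 : ℕ):ℤ)) = (-1:ℝ)^j := by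
  rw [nod, Polynomial.Chebyshev.T_real_cos]
  have hd : ((2*m+1 : ℕ) : ℝ) ≠ 0 := by positivity
  rw [show ((j:ℝ) * π / (2*↑m+1)) = ((j:ℝ) * π / ((2*m+1:ℕ):ℝ)) by push_cast; ring] at *
  push_cast
  rw [show (2*(m:ℝ)+1) * ((j:ℝ) * π / (2*(m:ℝ)+1)) = (j:ℝ) * π by
    field_simp]
  simpa using Real.cos_nat_mul_pi_sub 0 j

lemma deriv_T_at_zero (m : ℕ) :
    Polynomial.eval 0 (Polynomial.derivative (Polynomial.Chebyshev.T ℝ ((2*m+1 : ℕ):ℤ)))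
      = (2*m+1 : ℝ) * (-1:ℝ)^m := by
  rw [Polynomial.Chebyshev.T_derivative_eq_U]
  rw [Polynomial.eval_mul]
  have h1 : Polynomial.eval (0:ℝ) (((2*m+1 : ℕ):ℤ) : Polynomial ℝ) = (2*m+1 : ℝ) := by
    push_cast; simp
  rw [h1]
  congr 1
  -- U at 0
  have h2 := Polynomial.Chebyshev.U_real_cos (π/2) (((2*m+1 : ℕ):ℤ) - 1)
  rw [Real.cos_pi_div_two, Real.sin_pi_div_two, mul_one] at h2
  rw [h2]
  have : ((((2*m+1 : ℕ):ℤ) - 1 : ℤ) + 1 : ℝ) * (π/2) = (m:ℝ) * π + π/2 := by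
    push_cast; ring
  rw [this, Real.sin_add, Real.sin_nat_mul_pi, Real.cos_pi_div_two, Real.sin_pi_div_two,
    zero_mul, zero_add, mul_one]
  simpa using Real.cos_nat_mul_pi_sub 0 m

lemma sum_abs_wt (m : ℕ) :
    ∑ j ∈ Finset.range (2*m+2), |wt m j| = (2*m+1 : ℝ) := by
  have habs : ∀ j ∈ Finset.range (2*m+2), |wt m j| = (-1:ℝ)^(j+m) * wt m j := by
    intro j hj
    have h := wt_sign m hj
    have : |(-1:ℝ)^(j+m) * wt m j| = (-1:ℝ)^(j+m) * wt m j := abs_of_pos h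
    rw [abs_mul, abs_pow, abs_neg, abs_one, one_pow, one_mul] at this
    exact this
  rw [Finset.sum_congr rfl habs]
  have hsplit : ∀ j, (-1:ℝ)^(j+m) * wt m j = (-1:ℝ)^m * ((-1:ℝ)^j * wt m j) := by
    intro j; rw [pow_add]; ring
  simp_rw [hsplit]
  rw [← Finset.mul_sum]
  have hT := deriv_eval_eq m (Polynomial.Chebyshev.T ℝ ((2*m+1 : ℕ):ℤ))
    (lt_of_le_of_lt (degree_T_le (2*m+1)) (by exact_mod_cast WithBot.coe_lt_coe.mpr (by omega)))
  rw [deriv_T_at_zero m] at hT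
  have hvals : ∀ j ∈ Finset.range (2*m+2),
      Polynomial.eval (nod m j) (Polynomial.Chebyshev.T ℝ ((2*m+1 : ℕ):ℤ)) * wt m j
        = (-1:ℝ)^j * wt m j := by
    intro j hj
    rw [eval_nod_T m (by simp at hj; omega)]
  rw [Finset.sum_congr rfl hvals] at hT
  rw [← hT]
  have h2 : (-1:ℝ)^m * (-1)^m = 1 := by
    rw [← pow_add, show m+m = 2*m by ring, pow_mul]; norm_num
  calc (-1:ℝ)^m * ((2*m+1 : ℝ) * (-1:ℝ)^m)
      = (2*m+1 : ℝ) * ((-1:ℝ)^m * (-1)^m) := by ring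
    _ = (2*m+1 : ℝ) := by rw [h2, mul_one]

lemma key (m : ℕ) (p : Polynomial ℝ) (hdeg : p.degree < ((2*m+2 : ℕ) : WithBot ℕ))
    (hb : ∀ t : ℝ, t ∈ Set.Icc (-1:ℝ) 1 → |Polynomial.eval t p| ≤ 1) :
    |p.coeff 1| ≤ (2*m+1 : ℝ) := by
  have h1 : p.coeff 1 = Polynomial.eval 0 (Polynomial.derivative p) := by
    rw [← Polynomial.coeff_zero_eq_eval_zero, Polynomial.coeff_derivative]
    norm_num
  rw [h1, deriv_eval_eq m p hdeg]
  calc |∑ j ∈ Finset.range (2*m+2), Polynomial.eval (nod m j) p * wt m j|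
      ≤ ∑ j ∈ Finset.range (2*m+2), |Polynomial.eval (nod m j) p * wt m j| :=
        Finset.abs_sum_le_sum_abs _ _
    _ ≤ ∑ j ∈ Finset.range (2*m+2), |wt m j| := by
        apply Finset.sum_le_sum
        intro j _
        rw [abs_mul]
        have hmem : nod m j ∈ Set.Icc (-1:ℝ) 1 :=
          ⟨Real.neg_one_le_cos _, Real.cos_le_one _⟩
        calc |Polynomial.eval (nod m j) p| * |wt m j|
            ≤ 1 * |wt m j| := mul_le_mul_of_nonneg_right (hb _ hmem) (abs_nonneg _)
          _ = |wt m j| := one_mul _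
    _ = (2*m+1 : ℝ) := sum_abs_wt m

lemma sgn_abs (b : Bool) : |sgn b| = 1 := by
  cases b <;> simp [sgn]

lemma homPart_one {n : ℕ} (f : (Fin n → Bool) → ℝ) (x : Fin n → Bool) :
    homPart f 1 x = ∑ i : Fin n, fcoeff f {i} * sgn (x i) := by
  rw [homPart]
  have himg : Finset.univ.filter (fun S : Finset (Fin n) => S.card = 1)
      = Finset.univ.image (fun i : Fin n => ({i} : Finset (Fin n))) := by
    ext S
    simp only [Finset.mem_filter, Finset.mem_univ, true_and, Finset.mem_image,
      Finset.card_eq_one]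
    exact ⟨fun ⟨a,h⟩ => ⟨a, h.symm⟩, fun ⟨a,h⟩ => ⟨a, h.symm⟩⟩
  rw [himg, Finset.sum_image (fun a _ b _ h => Finset.singleton_injective h)]
  apply Finset.sum_congr rfl
  intro i _
  congr 1
  rw [chi, Finset.prod_singleton]

lemma noise_eq {n d : ℕ} (f : (Fin n → Bool) → ℝ)
    (hdeg : ∀ S : Finset (Fin n), d < S.card → fcoeff f S = 0)
    (z : Fin n → Bool) (t : ℝ) :
    ∑ ℓ ∈ Finset.range (d+1), homPart f ℓ z * t^ℓ
      = (∑ y : Fin n → Bool, f y * ∏ i : Fin n, (1 + t * sgn (y i) * sgn (z i))) / 2^n := by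
  classical
  have hinner : ∀ S : Finset (Fin n), chi S z * t^(S.card)
      = ∏ i ∈ S, (t * sgn (z i)) := by
    intro S
    rw [chi, ← Finset.prod_const (b := t), ← Finset.prod_mul_distrib]
    apply Finset.prod_congr rfl
    intro i _
    ring
  have hsub : ∑ S ∈ Finset.univ.filter (fun S : Finset (Fin n) => S.card ≤ d),
      fcoeff f S * chi S z * t^(S.card)
      = ∑ S : Finset (Fin n), fcoeff f S * chi S z * t^(S.card) := by
    apply Finset.sum_subset (Finset.filter_subset _ _)
    intro S _ hS
    simp only [Finset.mem_filter, Finset.mem_univ, true_and, not_le] at hS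
    rw [hdeg S hS, zero_mul, zero_mul]
  have step1 : ∑ ℓ ∈ Finset.range (d+1), homPart f ℓ z * t^ℓ
      = ∑ S : Finset (Fin n), fcoeff f S * chi S z * t^(S.card) := by
    have hfib := Finset.sum_fiberwise_of_maps_to
      (g := fun S : Finset (Fin n) => S.card)
      (s := Finset.univ.filter (fun S : Finset (Fin n) => S.card ≤ d))
      (t := Finset.range (d+1))
      (f := fun S => fcoeff f S * chi S z * t^(S.card))
      (by intro S hS; simp at hS ⊢; omega)
    rw [← hsub, ← hfib]
    apply Finset.sum_congr rfl
    intro ℓ hℓ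
    have hfilter : (Finset.univ.filter (fun S : Finset (Fin n) => S.card ≤ d)).filter
        (fun S => S.card = ℓ) = Finset.univ.filter (fun S : Finset (Fin n) => S.card = ℓ) := by
      ext S
      simp only [Finset.mem_filter, Finset.mem_univ, true_and, Finset.mem_range] at hℓ ⊢
      constructor
      · rintro ⟨_, h⟩; exact h
      · intro h; omega
    rw [hfilter, homPart, Finset.sum_mul]
    apply Finset.sum_congr rfl
    intro S hS
    simp only [Finset.mem_filter] at hS
    rw [hS.2]
  rw [step1]
  have e1 : ∀ S : Finset (Fin n), fcoeff f S * chi S z * t^(S.card)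
      = (∑ y : Fin n → Bool, f y * (chi S y * ∏ i ∈ S, (t * sgn (z i)))) / 2^n := by
    intro S
    rw [mul_assoc, hinner S, fcoeff, div_mul_eq_mul_div]
    congr 1
    rw [Finset.sum_mul]
    apply Finset.sum_congr rfl; intro y _; ring
  rw [Finset.sum_congr rfl (fun S _ => e1 S), ← Finset.sum_div]
  congr 1
  rw [Finset.sum_comm]
  apply Finset.sum_congr rfl
  intro y _
  rw [← Finset.mul_sum]
  congr 1
  have e2 : ∀ S : Finset (Fin n), chi S y * ∏ i ∈ S, (t * sgn (z i))
      = ∏ i ∈ S, (t * sgn (y i) * sgn (z i)) := by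
    intro S
    rw [chi, ← Finset.prod_mul_distrib]
    apply Finset.prod_congr rfl
    intro i _
    ring
  rw [Finset.sum_congr rfl (fun S _ => e2 S)]
  have e3 := Fintype.prod_add (fun i : Fin n => t * sgn (y i) * sgn (z i)) (fun _ => (1:ℝ))
  simp only [Finset.prod_const_one, mul_one] at e3
  rw [show (∏ i : Fin n, (1 + t * sgn (y i) * sgn (z i)))
      = ∏ i : Fin n, (t * sgn (y i) * sgn (z i) + 1) from
    Finset.prod_congr rfl (fun i _ => add_comm _ _), e3]

lemma noise_bound {n d : ℕ} (f : (Fin n → Bool) → ℝ) (hbdd : ∀ x, |f x| ≤ 1)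
    (hdeg : ∀ S : Finset (Fin n), d < S.card → fcoeff f S = 0)
    (z : Fin n → Bool) {t : ℝ} (ht : t ∈ Set.Icc (-1:ℝ) 1) :
    |∑ ℓ ∈ Finset.range (d+1), homPart f ℓ z * t^ℓ| ≤ 1 := by
  rw [noise_eq f hdeg z t]
  have h2n : (0:ℝ) < 2^n := by positivity
  rw [abs_div, abs_of_pos h2n, div_le_one h2n]
  have hfac : ∀ (b c : Bool), 0 ≤ 1 + t * sgn b * sgn c := by
    intro b c
    have h1 : |t * sgn b * sgn c| ≤ 1 := by
      rw [abs_mul, abs_mul, sgn_abs, sgn_abs, mul_one, mul_one]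
      rw [abs_le]; exact ⟨ht.1, ht.2⟩
    have := abs_le.mp h1
    linarith [this.1]
  have hX : ∀ y : Fin n → Bool, 0 ≤ ∏ i : Fin n, (1 + t * sgn (y i) * sgn (z i)) := by
    intro y
    exact Finset.prod_nonneg (fun i _ => hfac (y i) (z i))
  have hsum : ∑ y : Fin n → Bool, (∏ i : Fin n, (1 + t * sgn (y i) * sgn (z i))) = 2^n := by
    have := (Fintype.prod_sum (fun (i : Fin n) (b : Bool) => 1 + t * sgn b * sgn (z i))).symm
    rw [this]
    have hcol : ∀ i : Fin n, ∑ b : Bool, (1 + t * sgn b * sgn (z i)) = 2 := by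
      intro i
      rw [Fintype.sum_bool]
      cases z i <;> simp [sgn] <;> ring
    rw [Finset.prod_congr rfl (fun i _ => hcol i), Finset.prod_const]
    simp
  calc |∑ y : Fin n → Bool, f y * ∏ i : Fin n, (1 + t * sgn (y i) * sgn (z i))|
      ≤ ∑ y : Fin n → Bool, |f y * ∏ i : Fin n, (1 + t * sgn (y i) * sgn (z i))| :=
        Finset.abs_sum_le_sum_abs _ _
    _ ≤ ∑ y : Fin n → Bool, (∏ i : Fin n, (1 + t * sgn (y i) * sgn (z i))) := by
        apply Finset.sum_le_sum
        intro y _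
        rw [abs_mul, abs_of_nonneg (hX y)]
        calc |f y| * (∏ i : Fin n, (1 + t * sgn (y i) * sgn (z i)))
            ≤ 1 * (∏ i : Fin n, (1 + t * sgn (y i) * sgn (z i))) :=
              mul_le_mul_of_nonneg_right (hbdd y) (hX y)
          _ = _ := one_mul _
    _ = 2^n := hsum

lemma main_bound {n d : ℕ} (hd : 1 ≤ d) (f : (Fin n → Bool) → ℝ) (hbdd : ∀ x, |f x| ≤ 1)
    (hdeg : ∀ S : Finset (Fin n), d < S.card → fcoeff f S = 0) (z : Fin n → Bool) :
    |homPart f 1 z| ≤ (d : ℝ) := by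
  classical
  set m := (d-1)/2 with hm
  set p : Polynomial ℝ := ∑ ℓ ∈ (Finset.range (d+1)).filter (fun ℓ => Odd ℓ),
    Polynomial.C (homPart f ℓ z) * Polynomial.X^ℓ with hp
  have hmem1 : 1 ∈ (Finset.range (d+1)).filter (fun ℓ => Odd ℓ) := by
    simp only [Finset.mem_filter, Finset.mem_range]
    exact ⟨by omega, odd_one⟩
  have hcoeff : p.coeff 1 = homPart f 1 z := by
    rw [hp, Polynomial.finset_sum_coeff]
    rw [Finset.sum_eq_single 1]
    · rw [Polynomial.coeff_C_mul, Polynomial.coeff_X_pow, if_pos rfl, mul_one]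
    · intro ℓ _ hℓ
      rw [Polynomial.coeff_C_mul, Polynomial.coeff_X_pow, if_neg (Ne.symm hℓ), mul_zero]
    · intro h; exact absurd hmem1 h
  have hdegp : p.degree < ((2*m+2 : ℕ) : WithBot ℕ) := by
    apply lt_of_le_of_lt (Polynomial.degree_sum_le _ _)
    rw [Finset.sup_lt_iff (by exact_mod_cast WithBot.bot_lt_coe _)]
    intro ℓ hℓ
    simp only [Finset.mem_filter, Finset.mem_range, Nat.odd_iff] at hℓ
    apply lt_of_le_of_lt (Polynomial.degree_C_mul_X_pow_le _ _)
    exact_mod_cast WithBot.coe_lt_coe.mpr (by omega)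
  have heval : ∀ t : ℝ, Polynomial.eval t p
      = ((∑ ℓ ∈ Finset.range (d+1), homPart f ℓ z * t^ℓ)
        - (∑ ℓ ∈ Finset.range (d+1), homPart f ℓ z * (-t)^ℓ)) / 2 := by
    intro t
    rw [hp, Polynomial.eval_finset_sum]
    simp only [Polynomial.eval_mul, Polynomial.eval_C, Polynomial.eval_pow, Polynomial.eval_X]
    rw [← Finset.sum_sub_distrib, Finset.sum_div, Finset.sum_filter]
    apply Finset.sum_congr rfl
    intro ℓ _
    rcases Nat.even_or_odd ℓ with he | ho
    · rw [if_neg (by simpa using he)]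
      rw [he.neg_pow]
      ring
    · rw [if_pos ho, ho.neg_pow]
      ring
  have hb : ∀ t : ℝ, t ∈ Set.Icc (-1:ℝ) 1 → |Polynomial.eval t p| ≤ 1 := by
    intro t ht
    rw [heval t]
    have h1 := noise_bound f hbdd hdeg z ht
    have h2 := noise_bound f hbdd hdeg z (t := -t)
      ⟨by linarith [ht.2], by linarith [ht.1]⟩
    rw [abs_div, abs_of_pos (by norm_num : (0:ℝ) < 2), div_le_one (by norm_num : (0:ℝ) < 2)]
    calc |_ - _| ≤ |∑ ℓ ∈ Finset.range (d+1), homPart f ℓ z * t^ℓ|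
          + |∑ ℓ ∈ Finset.range (d+1), homPart f ℓ z * (-t)^ℓ| := abs_sub _ _
      _ ≤ 2 := by linarith
  have hkey := key m p hdegp hb
  rw [hcoeff] at hkey
  calc |homPart f 1 z| ≤ (2*m+1 : ℝ) := hkey
    _ ≤ (d : ℝ) := by
        have : 2*m+1 ≤ d := by omega
        exact_mod_cast this

theorem stmt18' (n d : ℕ) (hd : 1 ≤ d) (f : (Fin n → Bool) → ℝ)
    (hbdd : ∀ x, |f x| ≤ 1)
    (hdeg : ∀ S : Finset (Fin n), d < S.card → fcoeff f S = 0) :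
    (∑ i : Fin n, |fcoeff f {i}|) ≤ (d : ℝ) ∧
    (∑ i : Fin n, |fcoeff f {i}|) =
      Finset.univ.sup' Finset.univ_nonempty (fun x : Fin n → Bool => |homPart f 1 x|) := by
  classical
  set xstar : Fin n → Bool := fun i => decide (0 ≤ fcoeff f {i}) with hx
  have hstar : homPart f 1 xstar = ∑ i : Fin n, |fcoeff f {i}| := by
    rw [homPart_one]
    apply Finset.sum_congr rfl
    intro i _
    by_cases h : 0 ≤ fcoeff f {i}
    · rw [hx]
      simp only [sgn, h, decide_eq_true_eq]
      norm_num
      exact (abs_of_nonneg h).symm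
    · rw [hx]
      simp only [sgn, h, decide_eq_true_eq]
      norm_num
      rw [abs_of_neg (lt_of_not_ge h)]
  have habs : ∀ x : Fin n → Bool, |homPart f 1 x| ≤ ∑ i : Fin n, |fcoeff f {i}| := by
    intro x
    rw [homPart_one]
    calc |∑ i : Fin n, fcoeff f {i} * sgn (x i)|
        ≤ ∑ i : Fin n, |fcoeff f {i} * sgn (x i)| := Finset.abs_sum_le_sum_abs _ _
      _ = ∑ i : Fin n, |fcoeff f {i}| := by
          apply Finset.sum_congr rfl
          intro i _
          rw [abs_mul, sgn_abs, mul_one]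
  have hle : (∑ i : Fin n, |fcoeff f {i}|) ≤ (d : ℝ) := by
    rw [← hstar]
    exact le_trans (le_abs_self _) (main_bound hd f hbdd hdeg xstar)
  refine ⟨hle, le_antisymm ?_ ?_⟩
  · rw [← hstar]
    refine le_trans (le_abs_self _) ?_
    exact Finset.le_sup' (fun x : Fin n → Bool => |homPart f 1 x|) (Finset.mem_univ xstar)
  · exact Finset.sup'_le _ _ (fun x _ => habs x)

end S18

/-- If `f : {±1}^n → [-1,1]` has degree `d ≥ 1`, then `Σ_{i=1}^n |f̂({i})| ≤ d`;
equivalently `‖f̂_1‖_1 = ‖f_1‖_∞ ≤ d`. -/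
theorem stmt18 (n d : ℕ) (hd : 1 ≤ d) (f : (Fin n → Bool) → ℝ)
    (hbdd : ∀ x, |f x| ≤ 1)
    (hdeg : ∀ S : Finset (Fin n), d < S.card → fcoeff f S = 0) :
    (∑ i : Fin n, |fcoeff f {i}|) ≤ (d : ℝ) ∧
    (∑ i : Fin n, |fcoeff f {i}|) =
      Finset.univ.sup' Finset.univ_nonempty (fun x : Fin n → Bool => |homPart f 1 x|) :=
  S18.stmt18' n d hd f hbdd hdeg
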